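/- The sign pattern of the invariant Hermitian form on the Jantzen quotients (Proposition 4.8): let k > 0 and for e ∈ ℝ and s ∈ ℕ set P_s(e) = ∏_{l=1}^{s} (k²/2 + e·(l − 1/2)²). Then: (a) if e ≥ 0, then P_s(e) > 0 for every s ∈ ℕ; (b) if e = e_m = −k²/(2·(m + 1/2)²) for some m ∈ ℕ, then P_s(e) > 0 for every s ≤ m and P_s(e) = 0 for every s > m; (c) if e < 0 and e ∉ E_b, then there exist s, t ∈ ℕ with P_s(e) > 0 and P_t(e) < 0 (the form is not of definite sign). -/

import Mathlib

noncomputable section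

/-- The finite product `P_s(e) = ∏_{l=1}^{s} (k²/2 + e·(l − 1/2)²)` of real numbers. -/
def Pprod (k e : ℝ) (s : ℕ) : ℝ :=
  ∏ l ∈ Finset.Icc 1 s, (k ^ 2 / 2 + e * ((l : ℝ) - 1 / 2) ^ 2)

/-- The bound-state spectrum `E_b = {−k²/(2·(m + 1/2)²) : m ∈ ℕ}`. -/
def Eb (k : ℝ) : Set ℝ := {e | ∃ m : ℕ, e = -k ^ 2 / (2 * ((m : ℝ) + 1 / 2) ^ 2)}

/-- The sign pattern of the invariant Hermitian form on the Jantzen quotients: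
(a) if `e ≥ 0` then `P_s(e) > 0` for all `s`; (b) if `e = e_m = −k²/(2(m+1/2)²)` then
`P_s(e) > 0` for `s ≤ m` and `P_s(e) = 0` for `s > m`; (c) if `e < 0` and `e ∉ E_b` then
the form is not of definite sign: some `P_s(e) > 0` and some `P_t(e) < 0`. -/
theorem stmt_19 (k : ℝ) (hk : 0 < k) (e : ℝ) :
    (0 ≤ e → ∀ s : ℕ, 0 < Pprod k e s) ∧
    (∀ m : ℕ, e = -k ^ 2 / (2 * ((m : ℝ) + 1 / 2) ^ 2) →
      (∀ s ≤ m, 0 < Pprod k e s) ∧ (∀ s, m < s → Pprod k e s = 0)) ∧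
    (e < 0 → e ∉ Eb k → ∃ s t : ℕ, 0 < Pprod k e s ∧ Pprod k e t < 0) := by
  refine ⟨?_, ?_, ?_⟩
  · intro he s
    apply Finset.prod_pos
    intro l hl
    have h1 : (0:ℝ) ≤ e * ((l:ℝ) - 1/2)^2 := mul_nonneg he (sq_nonneg _)
    nlinarith [sq_nonneg k]
  · intro m hm
    have hM : (0:ℝ) < ((m:ℝ) + 1/2)^2 := by positivity
    have hid : e * ((m:ℝ) + 1/2)^2 = -k^2/2 := by
      rw [hm]; field_simp
    have heneg : e < 0 := by
      rw [hm]
      apply div_neg_of_neg_of_pos (by nlinarith) (by positivity)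
    constructor
    · intro s hs
      apply Finset.prod_pos
      intro l hl
      simp only [Finset.mem_Icc] at hl
      have hl1 : (1:ℝ) ≤ (l:ℝ) := by exact_mod_cast hl.1
      have hlm : (l:ℝ) ≤ (m:ℝ) := by exact_mod_cast le_trans hl.2 hs
      have hX : ((l:ℝ) - 1/2)^2 < ((m:ℝ) + 1/2)^2 := by nlinarith
      have : e * ((l:ℝ) - 1/2)^2 > e * ((m:ℝ) + 1/2)^2 :=
        (mul_lt_mul_left_of_neg heneg).mpr hX
      rw [hid] at this
      linarith
    · intro s hms
      apply Finset.prod_eq_zero (i := m + 1)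
      · simp only [Finset.mem_Icc]
        omega
      · have : ((m + 1 : ℕ) : ℝ) - 1/2 = (m:ℝ) + 1/2 := by push_cast; ring
        rw [this]
        linarith [hid]
  · intro he hnb
    set A : ℝ := k ^ 2 / (-(2 * e)) with hA
    have h2e : (0:ℝ) < -(2 * e) := by linarith
    have hApos : 0 < A := div_pos (by positivity) h2e
    have heA : e * A = -k ^ 2 / 2 := by
      rw [hA]
      field_simp
      ring_nf; simp [ne_of_lt he]
    set c : ℝ := Real.sqrt A with hc
    have hcpos : 0 < c := Real.sqrt_pos.mpr hApos
    have hc2 : c ^ 2 = A := Real.sq_sqrt hApos.le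
    set s : ℕ := Nat.floor (c + 1/2) with hs
    have hsle : (s:ℝ) ≤ c + 1/2 := Nat.floor_le (by linarith)
    have hposfac : ∀ l ∈ Finset.Icc 1 s, 0 < k ^ 2 / 2 + e * ((l : ℝ) - 1 / 2) ^ 2 := by
      intro l hl
      simp only [Finset.mem_Icc] at hl
      have hl1 : (1:ℝ) ≤ (l:ℝ) := by exact_mod_cast hl.1
      have hls : (l:ℝ) ≤ (s:ℝ) := by exact_mod_cast hl.2
      have hlc : (l:ℝ) - 1/2 < c := by
        have hle : (l:ℝ) - 1/2 ≤ c := by linarith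
        rcases lt_or_eq_of_le hle with h | h
        · exact h
        · exfalso
          apply hnb
          refine ⟨l - 1, ?_⟩
          have hcast : ((l - 1 : ℕ) : ℝ) + 1/2 = (l:ℝ) - 1/2 := by
            have : (1:ℕ) ≤ l := hl.1
            push_cast [this]
            ring
          rw [hcast, h, hc2, hA]
          rw [eq_div_iff (by positivity)]
          field_simp
          ring_nf; simp [ne_of_lt he]
      have hsq : ((l:ℝ) - 1/2) ^ 2 < A := by
        rw [← hc2]
        apply sq_lt_sq' <;> nlinarith
      have : e * ((l:ℝ) - 1/2) ^ 2 > e * A := (mul_lt_mul_left_of_neg he).mpr hsq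
      rw [heA] at this
      linarith
    refine ⟨s, s + 1, Finset.prod_pos hposfac, ?_⟩
    rw [Pprod, Finset.prod_Icc_succ_top (Nat.le_add_left 1 s)]
    have hneg : k ^ 2 / 2 + e * (((s + 1 : ℕ) : ℝ) - 1 / 2) ^ 2 < 0 := by
      have hgt : c < ((s + 1 : ℕ) : ℝ) - 1/2 := by
        have := Nat.lt_floor_add_one (c + 1/2)
        push_cast
        linarith
      have hsq : A < (((s + 1 : ℕ) : ℝ) - 1/2) ^ 2 := by
        rw [← hc2]
        apply sq_lt_sq' <;> nlinarith
      have : e * (((s + 1 : ℕ) : ℝ) - 1/2) ^ 2 < e * A := (mul_lt_mul_left_of_neg he).mpr hsq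
      rw [heA] at this
      linarith
    exact mul_neg_of_pos_of_neg (Finset.prod_pos hposfac) hneg
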